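/- For every d ∈ ℕ there exists n ∈ ℕ such that the following holds: for every l ∈ ℕ, every Heyting algebra H of dimension ≤ d, every Heyting algebra H′, and all tuples ā ∈ H^l, ā′ ∈ H′^l, if for every Heyting term t in l variables of degree ≤ n one has t(ā) = ⊤ in H iff t(ā′) = ⊤ in H′, then for every Heyting term t in l variables (of arbitrary degree) one has t(ā) = ⊤ in H iff t(ā′) = ⊤ in H′. -/

import Mathlib

/-- Formal Heyting terms in `n` variables. -/
inductive HeytingTerm (n : ℕ) : Type
  | var : Fin n → HeytingTerm n
  | bot : HeytingTerm n
  | top : HeytingTerm n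
  | inf : HeytingTerm n → HeytingTerm n → HeytingTerm n
  | sup : HeytingTerm n → HeytingTerm n → HeytingTerm n
  | himp : HeytingTerm n → HeytingTerm n → HeytingTerm n

namespace HeytingTerm

/-- Evaluation of a Heyting term in a Heyting algebra. -/
def eval {n : ℕ} {H : Type*} [HeytingAlgebra H] (v : Fin n → H) : HeytingTerm n → H
  | var i => v i
  | bot => ⊥
  | top => ⊤
  | inf a b => a.eval v ⊓ b.eval v
  | sup a b => a.eval v ⊔ b.eval v
  | himp a b => a.eval v ⇨ b.eval v

/-- The degree of a Heyting term: the maximal number of nested occurrences of `⇨`. -/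
def degree {n : ℕ} : HeytingTerm n → ℕ
  | var _ => 0
  | bot => 0
  | top => 0
  | inf a b => max a.degree b.degree
  | sup a b => max a.degree b.degree
  | himp a b => max a.degree b.degree + 1

end HeytingTerm

/-- `StrongOrd b a` means `b ≫ a`, i.e. `b ⇨ a = a` and `a ≤ b`. -/
def StrongOrd {H : Type*} [HeytingAlgebra H] (b a : H) : Prop := b ⇨ a = a ∧ a ≤ b

/-- `H` has dimension `≤ d`: there is no chain `x₀, …, x_{d+1}` with `x_{d+1} ≠ ⊤` and
`x_{i+1} ≫ x_i` for all `0 ≤ i ≤ d`. -/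
def DimLE (H : Type*) [HeytingAlgebra H] (d : ℕ) : Prop :=
  ¬ ∃ x : Fin (d + 2) → H, x (Fin.last (d + 1)) ≠ ⊤ ∧
      ∀ i : Fin (d + 1), StrongOrd (x i.succ) (x i.castSucc)

namespace SimDimProof

open HeytingTerm

variable {l : ℕ}

/-! ### Canonical finite sups and infs of sets of terms -/

def listSup : List (HeytingTerm l) → HeytingTerm l
  | [] => .bot
  | t :: ts => .sup t (listSup ts)

def listInf : List (HeytingTerm l) → HeytingTerm l
  | [] => .top
  | t :: ts => .inf t (listInf ts)

noncomputable def supT (S : Set (HeytingTerm l)) : HeytingTerm l :=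
  @dite _ S.Finite (Classical.dec _) (fun h => listSup h.toFinset.toList) (fun _ => .bot)

noncomputable def infT (S : Set (HeytingTerm l)) : HeytingTerm l :=
  @dite _ S.Finite (Classical.dec _) (fun h => listInf h.toFinset.toList) (fun _ => .top)

section EvalLemmas
variable {K : Type*} [HeytingAlgebra K] {b : Fin l → K}

lemma le_eval_listSup {L : List (HeytingTerm l)} {t} (ht : t ∈ L) :
    t.eval b ≤ (listSup L).eval b := by
  induction L with
  | nil => simp at ht
  | cons s ts ih =>
    rcases List.mem_cons.1 ht with h | h
    · subst h; exact le_sup_left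
    · exact (ih h).trans le_sup_right

lemma eval_listSup_le {L : List (HeytingTerm l)} {y : K}
    (h : ∀ t ∈ L, t.eval b ≤ y) : (listSup L).eval b ≤ y := by
  induction L with
  | nil => exact bot_le
  | cons s ts ih =>
    exact sup_le (h s (by simp)) (ih fun t ht => h t (by simp [ht]))

lemma inf_eval_listSup_le {L : List (HeytingTerm l)} {c y : K}
    (h : ∀ t ∈ L, c ⊓ t.eval b ≤ y) : c ⊓ (listSup L).eval b ≤ y := by
  induction L with
  | nil => simp [listSup, eval]
  | cons s ts ih =>
    show c ⊓ (s.eval b ⊔ (listSup ts).eval b) ≤ y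
    rw [inf_sup_left]
    exact sup_le (h s (by simp)) (ih fun t ht => h t (by simp [ht]))

lemma degree_listSup_le {L : List (HeytingTerm l)} {k : ℕ}
    (h : ∀ t ∈ L, t.degree ≤ k) : (listSup L).degree ≤ k := by
  induction L with
  | nil => simp [listSup, degree]
  | cons s ts ih =>
    show max s.degree (listSup ts).degree ≤ k
    exact max_le (h s (by simp)) (ih fun t ht => h t (by simp [ht]))

lemma eval_listInf_le {L : List (HeytingTerm l)} {t} (ht : t ∈ L) :
    (listInf L).eval b ≤ t.eval b := by
  induction L with
  | nil => simp at ht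
  | cons s ts ih =>
    rcases List.mem_cons.1 ht with h | h
    · subst h; exact inf_le_left
    · exact inf_le_right.trans (ih h)

lemma le_eval_listInf {L : List (HeytingTerm l)} {y : K}
    (h : ∀ t ∈ L, y ≤ t.eval b) : y ≤ (listInf L).eval b := by
  induction L with
  | nil => exact le_top
  | cons s ts ih =>
    exact le_inf (h s (by simp)) (ih fun t ht => h t (by simp [ht]))

lemma degree_listInf_le {L : List (HeytingTerm l)} {k : ℕ}
    (h : ∀ t ∈ L, t.degree ≤ k) : (listInf L).degree ≤ k := by
  induction L with
  | nil => simp [listInf, degree]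
  | cons s ts ih =>
    show max s.degree (listInf ts).degree ≤ k
    exact max_le (h s (by simp)) (ih fun t ht => h t (by simp [ht]))

lemma le_eval_supT {S : Set (HeytingTerm l)} (hS : S.Finite) {t} (ht : t ∈ S) :
    t.eval b ≤ (supT S).eval b := by
  rw [supT, dif_pos hS]
  exact le_eval_listSup (by simp [hS.mem_toFinset, ht])

lemma eval_supT_le {S : Set (HeytingTerm l)} {y : K}
    (h : ∀ t ∈ S, t.eval b ≤ y) : (supT S).eval b ≤ y := by
  rw [supT]
  split
  · next hS => exact eval_listSup_le fun t ht => h t (by simpa [hS.mem_toFinset] using ht)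
  · exact bot_le

lemma inf_eval_supT_le {S : Set (HeytingTerm l)} {c y : K}
    (h : ∀ t ∈ S, c ⊓ t.eval b ≤ y) : c ⊓ (supT S).eval b ≤ y := by
  rw [supT]
  split
  · next hS => exact inf_eval_listSup_le fun t ht => h t (by simpa [hS.mem_toFinset] using ht)
  · simpa [eval] using bot_le

lemma degree_supT_le {S : Set (HeytingTerm l)} {k : ℕ}
    (h : ∀ t ∈ S, t.degree ≤ k) : (supT S).degree ≤ k := by
  rw [supT]
  split
  · next hS => exact degree_listSup_le fun t ht => h t (by simpa [hS.mem_toFinset] using ht)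
  · simp [degree]

lemma eval_infT_le {S : Set (HeytingTerm l)} (hS : S.Finite) {t} (ht : t ∈ S) :
    (infT S).eval b ≤ t.eval b := by
  rw [infT, dif_pos hS]
  exact eval_listInf_le (by simp [hS.mem_toFinset, ht])

lemma le_eval_infT {S : Set (HeytingTerm l)} {y : K}
    (h : ∀ t ∈ S, y ≤ t.eval b) : y ≤ (infT S).eval b := by
  rw [infT]
  split
  · next hS => exact le_eval_listInf fun t ht => h t (by simpa [hS.mem_toFinset] using ht)
  · exact le_top

lemma degree_infT_le {S : Set (HeytingTerm l)} {k : ℕ}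
    (h : ∀ t ∈ S, t.degree ≤ k) : (infT S).degree ≤ k := by
  rw [infT]
  split
  · next hS => exact degree_listInf_le fun t ht => h t (by simpa [hS.mem_toFinset] using ht)
  · simp [degree]

end EvalLemmas


/-! ### Prime theories -/

variable {H : Type*} [HeytingAlgebra H]

structure PrimeTheory (a : Fin l → H) where
  mem : Set (HeytingTerm l)
  closed : ∀ {t s : HeytingTerm l}, t ∈ mem → t.eval a ≤ s.eval a → s ∈ mem
  top_mem : HeytingTerm.top ∈ mem
  inf_mem : ∀ {t s : HeytingTerm l}, t ∈ mem → s ∈ mem → HeytingTerm.inf t s ∈ mem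
  bot_nmem : HeytingTerm.bot ∉ mem
  prime : ∀ {t s : HeytingTerm l}, HeytingTerm.sup t s ∈ mem → t ∈ mem ∨ s ∈ mem

variable {a : Fin l → H}

lemma PrimeTheory.mem_injective (a : Fin l → H) :
    Function.Injective (PrimeTheory.mem (a := a)) := by
  rintro ⟨⟩ ⟨⟩ h; congr

instance : PartialOrder (PrimeTheory a) :=
  PartialOrder.lift PrimeTheory.mem (PrimeTheory.mem_injective a)

lemma PrimeTheory.le_iff {u w : PrimeTheory a} : u ≤ w ↔ u.mem ⊆ w.mem := Iff.rfl

lemma PrimeTheory.lt_iff {u w : PrimeTheory a} : u < w ↔ u.mem ⊂ w.mem := by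
  rw [lt_iff_le_and_ne, Set.ssubset_iff_subset_ne]
  exact and_congr Iff.rfl (not_congr (PrimeTheory.mem_injective a).eq_iff.symm)

lemma PrimeTheory.eval_ne_top {w : PrimeTheory a} {s : HeytingTerm l}
    (hs : s ∉ w.mem) : s.eval a ≠ ⊤ := by
  intro h
  exact hs (w.closed w.top_mem (by simp [HeytingTerm.eval, h]))

lemma PrimeTheory.listSup_mem {w : PrimeTheory a} {L : List (HeytingTerm l)}
    (h : listSup L ∈ w.mem) : ∃ t ∈ L, t ∈ w.mem := by
  induction L with
  | nil => exact absurd h w.bot_nmem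
  | cons s ts ih =>
    rcases w.prime h with h' | h'
    · exact ⟨s, by simp, h'⟩
    · obtain ⟨t, ht, htm⟩ := ih h'
      exact ⟨t, by simp [ht], htm⟩

lemma PrimeTheory.supT_mem {w : PrimeTheory a} {S : Set (HeytingTerm l)}
    (h : supT S ∈ w.mem) : ∃ t ∈ S, t ∈ w.mem := by
  rw [supT] at h
  split at h
  · next hS =>
    obtain ⟨t, ht, htm⟩ := PrimeTheory.listSup_mem h
    exact ⟨t, by simpa [hS.mem_toFinset] using ht, htm⟩
  · exact absurd h w.bot_nmem

lemma PrimeTheory.listInf_mem {w : PrimeTheory a} {L : List (HeytingTerm l)}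
    (h : ∀ t ∈ L, t ∈ w.mem) : listInf L ∈ w.mem := by
  induction L with
  | nil => exact w.top_mem
  | cons s ts ih =>
    exact w.inf_mem (h s (by simp)) (ih fun t ht => h t (by simp [ht]))

lemma PrimeTheory.infT_mem {w : PrimeTheory a} {S : Set (HeytingTerm l)}
    (h : ∀ t ∈ S, t ∈ w.mem) : infT S ∈ w.mem := by
  rw [infT]
  split
  · next hS => exact PrimeTheory.listInf_mem fun t ht => h t (by simpa [hS.mem_toFinset] using ht)
  · exact w.top_mem

/-- A "theory filter": the data needed for the Zorn argument. -/
def Filterish (a : Fin l → H) (T : Set (HeytingTerm l)) : Prop :=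
  HeytingTerm.top ∈ T ∧
  (∀ {t s : HeytingTerm l}, t ∈ T → s ∈ T → HeytingTerm.inf t s ∈ T) ∧
  (∀ {t s : HeytingTerm l}, t ∈ T → t.eval a ≤ s.eval a → s ∈ T)

lemma exists_prime_avoiding {F : Set (HeytingTerm l)} (hF : Filterish a F)
    {s₀ : HeytingTerm l} (hs₀ : s₀ ∉ F) :
    ∃ w : PrimeTheory a, F ⊆ w.mem ∧ s₀ ∉ w.mem := by
  classical
  set 𝒮 : Set (Set (HeytingTerm l)) := {T | Filterish a T ∧ F ⊆ T ∧ s₀ ∉ T} with h𝒮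
  have hz : ∀ c ⊆ 𝒮, IsChain (fun x1 x2 => x1 ⊆ x2) c → c.Nonempty →
      ∃ ub ∈ 𝒮, ∀ s ∈ c, s ⊆ ub := by
    intro c hc hchain hne
    refine ⟨⋃₀ c, ⟨⟨?_, ?_, ?_⟩, ?_, ?_⟩, fun s hs => Set.subset_sUnion_of_mem hs⟩
    · obtain ⟨T, hT⟩ := hne
      exact Set.mem_sUnion.2 ⟨T, hT, (hc hT).1.1⟩
    · rintro t s ⟨T₁, hT₁, ht⟩ ⟨T₂, hT₂, hs⟩
      rcases hchain.total hT₁ hT₂ with h | h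
      · exact ⟨T₂, hT₂, (hc hT₂).1.2.1 (h ht) hs⟩
      · exact ⟨T₁, hT₁, (hc hT₁).1.2.1 ht (h hs)⟩
    · rintro t s ⟨T, hT, ht⟩ hle
      exact ⟨T, hT, (hc hT).1.2.2 ht hle⟩
    · obtain ⟨T, hT⟩ := hne
      exact (hc hT).2.1.trans (Set.subset_sUnion_of_mem hT)
    · rintro ⟨T, hT, hsT⟩
      exact (hc hT).2.2 hsT
  obtain ⟨M, hFM, hmax⟩ := zorn_subset_nonempty 𝒮 hz F ⟨hF, subset_rfl, hs₀⟩
  have hMmax : ∀ T ∈ 𝒮, M ⊆ T → T = M := fun T hT hMT => hmax.eq_of_ge hT hMT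
  obtain ⟨⟨htop, hinf, hup⟩, hFsub, hs₀M⟩ : M ∈ 𝒮 := hmax.1
  have hbot : HeytingTerm.bot ∉ M := fun h => hs₀M (hup h (by simp [HeytingTerm.eval]))
  -- primality by maximality
  have hprime : ∀ {t s : HeytingTerm l}, HeytingTerm.sup t s ∈ M → t ∈ M ∨ s ∈ M := by
    intro t s hts
    by_contra hcon
    push_neg at hcon
    obtain ⟨ht, hs⟩ := hcon
    have ext : ∀ r : HeytingTerm l, r ∉ M → ∃ c ∈ M, (c.inf r).eval a ≤ s₀.eval a := by
      intro r hr
      set M' : Set (HeytingTerm l) := {x | ∃ c ∈ M, (c.inf r).eval a ≤ x.eval a} with hM'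
      have hsubM' : M ⊆ M' := fun x hx =>
        ⟨x, hx, by simp [HeytingTerm.eval, inf_le_left]⟩
      have hrM' : r ∈ M' := ⟨HeytingTerm.top, htop, by simp [HeytingTerm.eval]⟩
      have hM'fil : Filterish a M' := by
        refine ⟨hsubM' htop, ?_, ?_⟩
        · rintro x y ⟨c₁, hc₁, h₁⟩ ⟨c₂, hc₂, h₂⟩
          refine ⟨c₁.inf c₂, hinf hc₁ hc₂, ?_⟩
          simp only [HeytingTerm.eval]
          calc (c₁.eval a ⊓ c₂.eval a) ⊓ r.eval a
              ≤ (c₁.eval a ⊓ r.eval a) ⊓ (c₂.eval a ⊓ r.eval a) := by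
                refine le_inf (inf_le_inf_right _ inf_le_left) (inf_le_inf_right _ inf_le_right)
            _ ≤ x.eval a ⊓ y.eval a := inf_le_inf h₁ h₂
        · rintro x y ⟨c, hc, h⟩ hle
          exact ⟨c, hc, h.trans hle⟩
      by_contra hno
      push_neg at hno
      have hs₀M' : s₀ ∉ M' := by
        rintro ⟨c, hc, hle⟩
        exact hno c hc hle
      have : M' = M := hMmax M' ⟨hM'fil, hFsub.trans hsubM', hs₀M'⟩ hsubM'
      exact hr (this ▸ hrM')
    obtain ⟨c₁, hc₁, h₁⟩ := ext t ht
    obtain ⟨c₂, hc₂, h₂⟩ := ext s hs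
    have hc : c₁.inf c₂ ∈ M := hinf hc₁ hc₂
    have hcts : (c₁.inf c₂).inf (t.sup s) ∈ M := hinf hc hts
    have : ((c₁.inf c₂).inf (t.sup s)).eval a ≤ s₀.eval a := by
      simp only [HeytingTerm.eval]
      rw [inf_sup_left]
      refine sup_le ?_ ?_
      · exact le_trans (inf_le_inf_right _ inf_le_left) h₁
      · exact le_trans (inf_le_inf_right _ inf_le_right) h₂
    exact hs₀M (hup hcts this)
  exact ⟨⟨M, fun ht hle => hup ht hle, htop, fun ht hs => hinf ht hs, hbot,
    fun h => hprime h⟩, hFsub, hs₀M⟩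

/-- Kripke clause for implication, via prime extension. -/
lemma himp_mem_iff {w : PrimeTheory a} {r s : HeytingTerm l} :
    HeytingTerm.himp r s ∈ w.mem ↔
      ∀ u : PrimeTheory a, w ≤ u → r ∈ u.mem → s ∈ u.mem := by
  constructor
  · intro h u hwu hr
    have h' : HeytingTerm.himp r s ∈ u.mem := hwu h
    exact u.closed (u.inf_mem h' hr) (by simp [HeytingTerm.eval, himp_inf_le])
  · intro hall
    by_contra hnm
    set F : Set (HeytingTerm l) := {x | ∃ c ∈ w.mem, (c.inf r).eval a ≤ x.eval a} with hFdef
    have hFfil : Filterish a F := by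
      refine ⟨⟨HeytingTerm.top, w.top_mem, by simp [HeytingTerm.eval, inf_le_left]⟩, ?_, ?_⟩
      · rintro x y ⟨c₁, hc₁, h₁⟩ ⟨c₂, hc₂, h₂⟩
        refine ⟨c₁.inf c₂, w.inf_mem hc₁ hc₂, ?_⟩
        simp only [HeytingTerm.eval]
        calc (c₁.eval a ⊓ c₂.eval a) ⊓ r.eval a
            ≤ (c₁.eval a ⊓ r.eval a) ⊓ (c₂.eval a ⊓ r.eval a) := by
              refine le_inf (inf_le_inf_right _ inf_le_left) (inf_le_inf_right _ inf_le_right)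
          _ ≤ x.eval a ⊓ y.eval a := inf_le_inf h₁ h₂
      · rintro x y ⟨c, hc, h⟩ hle
        exact ⟨c, hc, h.trans hle⟩
    have hsF : s ∉ F := by
      rintro ⟨c, hc, hle⟩
      simp only [HeytingTerm.eval] at hle
      have : c.eval a ≤ (HeytingTerm.himp r s).eval a := by
        simp only [HeytingTerm.eval]
        exact le_himp_iff.2 hle
      exact hnm (w.closed hc this)
    obtain ⟨u, hFu, hsu⟩ := exists_prime_avoiding hFfil hsF
    have hwu : w ≤ u := fun x hx =>
      hFu ⟨x, hx, by simp [HeytingTerm.eval, inf_le_left]⟩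
    have hru : r ∈ u.mem := hFu ⟨HeytingTerm.top, w.top_mem, by simp [HeytingTerm.eval]⟩
    exact hsu (hall u hwu hru)


/-! ### Strong chains and rank -/

lemma strongOrd_sup_himp {x y : H} (h : y ≤ x) : StrongOrd (x ⊔ (x ⇨ y)) y := by
  constructor
  · apply le_antisymm
    · rw [sup_himp_distrib]
      exact ((inf_comm (x ⇨ y) ((x ⇨ y) ⇨ y)).le).trans himp_inf_le
    · exact le_himp_iff.2 inf_le_left
  · exact h.trans le_sup_left

lemma exists_step {a : Fin l → H} {F G : PrimeTheory a} (hFG : F < G) {s : HeytingTerm l}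
    (hs : s ∉ G.mem) :
    ∃ s' : HeytingTerm l, s' ∉ F.mem ∧ StrongOrd (s'.eval a) (s.eval a) := by
  have hlt := PrimeTheory.lt_iff.1 hFG
  have hsub : F.mem ⊆ G.mem := hlt.1
  obtain ⟨c, hcG, hcF⟩ := Set.exists_of_ssubset hlt
  set q : HeytingTerm l := HeytingTerm.sup c s with hq
  refine ⟨HeytingTerm.sup q (HeytingTerm.himp q s), ?_, ?_⟩
  · intro hmem
    rcases F.prime hmem with h | h
    · rcases F.prime h with h' | h'
      · exact hcF h'
      · exact hs (hsub h')
    · have hqG : q ∈ G.mem := G.closed hcG (le_sup_left : c.eval a ≤ c.eval a ⊔ s.eval a)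
      have hinf := G.inf_mem (hsub h) hqG
      exact hs (G.closed hinf (himp_inf_le : (q.eval a ⇨ s.eval a) ⊓ q.eval a ≤ s.eval a))
  · exact strongOrd_sup_himp (le_sup_right : s.eval a ≤ c.eval a ⊔ s.eval a)

lemma exists_chain_list {a : Fin l → H} :
    ∀ (rest : List (PrimeTheory a)) (G : PrimeTheory a),
      List.Chain' (· > ·) (G :: rest) → ∀ s : HeytingTerm l, s ∉ G.mem →
      ∃ xs : List H, xs.length = rest.length ∧
        List.Chain' (fun p q => StrongOrd q p) (s.eval a :: xs) ∧
        ∀ hne : (s.eval a :: xs) ≠ [], (s.eval a :: xs).getLast hne ≠ ⊤ := by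
  intro rest
  induction rest with
  | nil =>
    intro G _ s hs
    exact ⟨[], rfl, List.isChain_singleton _,
      fun _ => by simpa using PrimeTheory.eval_ne_top hs⟩
  | cons F rest' ih =>
    intro G hchain s hs
    have hc := List.isChain_cons_cons.1 hchain
    obtain ⟨s', hs'F, hSO⟩ := exists_step hc.1 hs
    obtain ⟨xs', hlen, hch, hlast⟩ := ih F hc.2 s' hs'F
    refine ⟨s'.eval a :: xs', by simp [hlen], List.isChain_cons_cons.2 ⟨hSO, hch⟩, ?_⟩
    intro hne
    rw [List.getLast_cons (by simp : (s'.eval a :: xs') ≠ [])]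
    exact hlast _

lemma chain_length_le {d : ℕ} (hdim : DimLE H d) {a : Fin l → H}
    (L : List (PrimeTheory a)) (hL : List.Chain' (· < ·) L) : L.length ≤ d + 1 := by
  by_contra hlen
  push_neg at hlen
  set L' := L.take (d + 2) with hL'def
  have hL' : List.Chain' (· < ·) L' := hL.take _
  have hlen' : L'.length = d + 2 := by
    simp [hL'def]
    omega
  have hrev : List.Chain' (· > ·) L'.reverse := by
    exact List.isChain_reverse.2 hL'
  have hrevlen : L'.reverse.length = d + 2 := by simp [hlen']
  obtain ⟨G, rest, hGrest⟩ : ∃ G rest, L'.reverse = G :: rest := by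
    cases h : L'.reverse with
    | nil => rw [h] at hrevlen; simp at hrevlen
    | cons G rest => exact ⟨G, rest, rfl⟩
  rw [hGrest] at hrev hrevlen
  have hrestlen : rest.length = d + 1 := by simpa using hrevlen
  obtain ⟨xs, hxslen, hch, hlast⟩ :=
    exists_chain_list rest G hrev HeytingTerm.bot G.bot_nmem
  set full : List H := (HeytingTerm.bot : HeytingTerm l).eval a :: xs with hfull
  have hfulllen : full.length = d + 2 := by simp [hfull, hxslen, hrestlen]
  apply hdim
  refine ⟨fun i => full.get ⟨i, by omega⟩, ?_, ?_⟩
  · have := hlast (by simp [hfull])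
    convert this using 2
    rw [List.getLast_eq_getElem]
    congr 1
    simp [hfulllen]
  · intro i
    have hget := List.isChain_iff_getElem.1 hch i.val (by omega)
    exact hget

def chainLens {a : Fin l → H} (w : PrimeTheory a) : Set ℕ :=
  {k | ∃ c : List (PrimeTheory a), List.Chain' (· < ·) (w :: c) ∧ c.length = k}

noncomputable def rank {a : Fin l → H} (w : PrimeTheory a) : ℕ := sSup (chainLens w)

lemma zero_mem_chainLens {a : Fin l → H} (w : PrimeTheory a) : 0 ∈ chainLens w :=
  ⟨[], List.isChain_singleton _, rfl⟩

lemma chainLens_le {d : ℕ} (hdim : DimLE H d) {a : Fin l → H} {w : PrimeTheory a}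
    {k : ℕ} (hk : k ∈ chainLens w) : k ≤ d := by
  obtain ⟨c, hc, hlen⟩ := hk
  have := chain_length_le hdim (w :: c) hc
  simp [hlen] at this
  omega

lemma chainLens_bdd {d : ℕ} (hdim : DimLE H d) {a : Fin l → H} (w : PrimeTheory a) :
    BddAbove (chainLens w) :=
  ⟨d, fun _ hk => chainLens_le hdim hk⟩

lemma rank_le_d {d : ℕ} (hdim : DimLE H d) {a : Fin l → H} (w : PrimeTheory a) :
    rank w ≤ d :=
  csSup_le ⟨0, zero_mem_chainLens w⟩ (fun _ hk => chainLens_le hdim hk)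

lemma rank_lt_of_lt {d : ℕ} (hdim : DimLE H d) {a : Fin l → H} {w u : PrimeTheory a}
    (h : w < u) : rank u < rank w := by
  have hmem : rank u ∈ chainLens u :=
    Nat.sSup_mem ⟨0, zero_mem_chainLens u⟩ (chainLens_bdd hdim u)
  obtain ⟨c, hc, hlen⟩ := hmem
  have : rank u + 1 ∈ chainLens w :=
    ⟨u :: c, List.isChain_cons_cons.2 ⟨h, hc⟩, by simp [hlen]⟩
  have h2 := le_csSup (chainLens_bdd hdim w) this
  exact Nat.lt_of_lt_of_le (Nat.lt_succ_self _) h2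


/-! ### The characteristic terms -/

noncomputable def Lof (S : Set (Fin l)) : HeytingTerm l := infT (HeytingTerm.var '' S)

noncomputable def Nof (S : Set (Fin l)) : HeytingTerm l := supT (HeytingTerm.var '' Sᶜ)

def lit {a : Fin l → H} (w : PrimeTheory a) : Set (Fin l) :=
  {i | HeytingTerm.var i ∈ w.mem}

def SW {a : Fin l → H} (w : PrimeTheory a) : Set (PrimeTheory a) := {u | w < u}

lemma SW_trans {a : Fin l → H} {w u v : PrimeTheory a} (hu : u ∈ SW w) (hv : v ∈ SW u) :
    v ∈ SW w := show w < v from lt_trans (show w < u from hu) (show u < v from hv)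

noncomputable def body {a : Fin l → H} (f : PrimeTheory a → HeytingTerm l) (w : PrimeTheory a) :
    HeytingTerm l :=
  HeytingTerm.inf (Lof (lit w))
    (HeytingTerm.himp
      (HeytingTerm.sup (Nof (lit w))
        (supT ((fun u => HeytingTerm.himp (f u) (supT (f '' SW u))) '' SW w)))
      (supT (f '' SW w)))

lemma body_congr {a : Fin l → H} {f g : PrimeTheory a → HeytingTerm l} {w : PrimeTheory a}
    (h : ∀ u ∈ SW w, f u = g u) : body f w = body g w := by
  unfold body
  have h1 : f '' SW w = g '' SW w := Set.image_congr h
  have h2 : (fun u => HeytingTerm.himp (f u) (supT (f '' SW u))) '' SW w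
      = (fun u => HeytingTerm.himp (g u) (supT (g '' SW u))) '' SW w := by
    apply Set.image_congr
    intro u hu
    rw [h u hu, Set.image_congr (fun v hv => h v (SW_trans hu hv))]
  rw [h1, h2]

noncomputable def chiAux {a : Fin l → H} : ℕ → PrimeTheory a → HeytingTerm l
  | 0 => fun _ => HeytingTerm.bot
  | (k+1) => fun w => body (chiAux k) w

noncomputable def chi {a : Fin l → H} (w : PrimeTheory a) : HeytingTerm l :=
  chiAux (rank w + 1) w

lemma chiAux_eq_body {d : ℕ} (hdim : DimLE H d) {a : Fin l → H} :
    ∀ (n : ℕ) (w : PrimeTheory a), rank w < n → chiAux n w = body chi w := by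
  intro n
  induction n using Nat.strong_induction_on with
  | _ n ih =>
    intro w hw
    cases n with
    | zero => omega
    | succ m =>
      show body (chiAux m) w = body chi w
      apply body_congr
      intro u hu
      have hu' : rank u < rank w := rank_lt_of_lt hdim hu
      have h1 : chiAux m u = body chi u := ih m (by omega) u (by omega)
      have h2 : chi u = body chi u :=
        ih (rank u + 1) (by omega) u (by omega)
      rw [h1, h2]

lemma chi_eq_body {d : ℕ} (hdim : DimLE H d) {a : Fin l → H} (w : PrimeTheory a) :
    chi w = body chi w :=
  chiAux_eq_body hdim (rank w + 1) w (Nat.lt_succ_self _)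

noncomputable def Sig {a : Fin l → H} (w : PrimeTheory a) : HeytingTerm l :=
  supT (chi '' SW w)

noncomputable def psi {a : Fin l → H} (u : PrimeTheory a) : HeytingTerm l :=
  HeytingTerm.himp (chi u) (Sig u)

noncomputable def theta {a : Fin l → H} (w : PrimeTheory a) : HeytingTerm l :=
  HeytingTerm.sup (Nof (lit w)) (supT (psi '' SW w))

lemma chi_eq {d : ℕ} (hdim : DimLE H d) {a : Fin l → H} (w : PrimeTheory a) :
    chi w = HeytingTerm.inf (Lof (lit w)) (HeytingTerm.himp (theta w) (Sig w)) :=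
  chi_eq_body hdim w

/-! ### Finiteness of the family of characteristic terms -/

noncomputable def Gfun (p : Set (Fin l) × Set (HeytingTerm l × HeytingTerm l)) :
    HeytingTerm l × HeytingTerm l :=
  (HeytingTerm.inf (Lof p.1)
    (HeytingTerm.himp
      (HeytingTerm.sup (Nof p.1)
        (supT ((fun q => HeytingTerm.himp q.1 q.2) '' p.2)))
      (supT (Prod.fst '' p.2))),
   supT (Prod.fst '' p.2))

lemma chiSig_eq_Gfun {d : ℕ} (hdim : DimLE H d) {a : Fin l → H} (w : PrimeTheory a) :
    (chi w, Sig w) = Gfun (lit w, (fun u => (chi u, Sig u)) '' SW w) := by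
  unfold Gfun
  have hfst : Prod.fst '' ((fun u => (chi u, Sig u)) '' SW w) = chi '' SW w := by
    rw [Set.image_image]
  have hpsi : (fun q : HeytingTerm l × HeytingTerm l => HeytingTerm.himp q.1 q.2) ''
      ((fun u => (chi u, Sig u)) '' SW w) = psi '' SW w := by
    rw [Set.image_image]; rfl
  simp only [hfst, hpsi]
  refine Prod.ext ?_ ?_
  · rw [chi_eq hdim w]; rfl
  · rfl

lemma pairs_finite {d : ℕ} (hdim : DimLE H d) {a : Fin l → H} :
    ∀ k : ℕ, ((fun w => (chi w, Sig w)) '' {w : PrimeTheory a | rank w ≤ k}).Finite := by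
  intro k
  induction k with
  | zero =>
    apply Set.Finite.subset
      ((Set.finite_univ.prod ((Set.finite_empty (α := HeytingTerm l × HeytingTerm l)).finite_subsets)).image Gfun)
    rintro _ ⟨w, hw, rfl⟩
    refine ⟨(lit w, (fun u => (chi u, Sig u)) '' SW w), ⟨Set.mem_univ _, ?_⟩,
      (chiSig_eq_Gfun hdim w).symm⟩
    rintro _ ⟨u, hu, rfl⟩
    have := rank_lt_of_lt hdim hu
    simp only [Set.mem_setOf_eq] at hw
    omega
  | succ k ih =>
    apply Set.Finite.subset ((Set.finite_univ.prod ih.finite_subsets).image Gfun)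
    rintro _ ⟨w, hw, rfl⟩
    refine ⟨(lit w, (fun u => (chi u, Sig u)) '' SW w), ⟨Set.mem_univ _, ?_⟩,
      (chiSig_eq_Gfun hdim w).symm⟩
    rintro _ ⟨u, hu, rfl⟩
    have := rank_lt_of_lt hdim hu
    simp only [Set.mem_setOf_eq] at hw
    exact ⟨u, by simp only [Set.mem_setOf_eq]; omega, rfl⟩

lemma chi_range_finite {d : ℕ} (hdim : DimLE H d) {a : Fin l → H} :
    (Set.range (chi : PrimeTheory a → HeytingTerm l)).Finite := by
  have h := (pairs_finite hdim (a := a) d).image Prod.fst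
  apply h.subset
  rintro _ ⟨w, rfl⟩
  exact ⟨(chi w, Sig w), ⟨w, by simp [rank_le_d hdim w], rfl⟩, rfl⟩

lemma chi_SW_finite {d : ℕ} (hdim : DimLE H d) {a : Fin l → H} (w : PrimeTheory a) :
    (chi '' SW w).Finite :=
  (chi_range_finite hdim).subset (by rintro _ ⟨u, _, rfl⟩; exact ⟨u, rfl⟩)

lemma psi_SW_finite {d : ℕ} (hdim : DimLE H d) {a : Fin l → H} (w : PrimeTheory a) :
    (psi '' SW w).Finite := by
  have h := ((pairs_finite hdim (a := a) d).image
    (fun q : HeytingTerm l × HeytingTerm l => HeytingTerm.himp q.1 q.2))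
  apply h.subset
  rintro _ ⟨u, hu, rfl⟩
  exact ⟨(chi u, Sig u), ⟨u, by simp [rank_le_d hdim u], rfl⟩, rfl⟩

noncomputable def Xt {a : Fin l → H} (w : PrimeTheory a) (t : HeytingTerm l) :
    HeytingTerm l :=
  supT {c | ∃ u ∈ SW w, t ∈ u.mem ∧ c = chi u}

lemma Xt_set_finite {d : ℕ} (hdim : DimLE H d) {a : Fin l → H} (w : PrimeTheory a)
    (t : HeytingTerm l) : {c | ∃ u ∈ SW w, t ∈ u.mem ∧ c = chi u}.Finite :=
  (chi_range_finite hdim).subset (by rintro _ ⟨u, _, _, rfl⟩; exact ⟨u, rfl⟩)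


/-! ### Evaluation lemmas for the characteristic terms -/

@[simp] lemma eval_var {K : Type*} [HeytingAlgebra K] (b : Fin l → K) (i : Fin l) :
    (HeytingTerm.var i).eval b = b i := rfl
@[simp] lemma eval_bot {K : Type*} [HeytingAlgebra K] (b : Fin l → K) :
    (HeytingTerm.bot : HeytingTerm l).eval b = ⊥ := rfl
@[simp] lemma eval_top {K : Type*} [HeytingAlgebra K] (b : Fin l → K) :
    (HeytingTerm.top : HeytingTerm l).eval b = ⊤ := rfl
@[simp] lemma eval_inf' {K : Type*} [HeytingAlgebra K] (b : Fin l → K) (x y : HeytingTerm l) :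
    (HeytingTerm.inf x y).eval b = x.eval b ⊓ y.eval b := rfl
@[simp] lemma eval_sup' {K : Type*} [HeytingAlgebra K] (b : Fin l → K) (x y : HeytingTerm l) :
    (HeytingTerm.sup x y).eval b = x.eval b ⊔ y.eval b := rfl
@[simp] lemma eval_himp' {K : Type*} [HeytingAlgebra K] (b : Fin l → K) (x y : HeytingTerm l) :
    (HeytingTerm.himp x y).eval b = x.eval b ⇨ y.eval b := rfl

section ChiEval

variable {d : ℕ} {a : Fin l → H} {K : Type*} [HeytingAlgebra K] {b : Fin l → K}

lemma chi_le_var (hdim : DimLE H d) {w : PrimeTheory a} {i : Fin l}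
    (hi : HeytingTerm.var i ∈ w.mem) : (chi w).eval b ≤ b i := by
  rw [chi_eq hdim w]
  refine inf_le_left.trans ?_
  have := eval_infT_le (b := b) ((Set.toFinite (lit w)).image HeytingTerm.var)
    (t := HeytingTerm.var i) ⟨i, hi, rfl⟩
  simpa [Lof] using this

lemma chi_inf_theta_le_Sig (hdim : DimLE H d) (w : PrimeTheory a) :
    (chi w).eval b ⊓ (theta w).eval b ≤ (Sig w).eval b := by
  rw [chi_eq hdim w]
  calc ((Lof (lit w)).eval b ⊓ ((theta w).eval b ⇨ (Sig w).eval b)) ⊓ (theta w).eval b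
      ≤ ((theta w).eval b ⇨ (Sig w).eval b) ⊓ (theta w).eval b :=
        inf_le_inf_right _ inf_le_right
    _ ≤ (Sig w).eval b := himp_inf_le

lemma var_le_theta {w : PrimeTheory a} {i : Fin l}
    (hi : HeytingTerm.var i ∉ w.mem) : b i ≤ (theta w).eval b := by
  refine le_trans ?_ le_sup_left
  have := le_eval_supT (b := b) ((Set.toFinite ((lit w)ᶜ)).image HeytingTerm.var)
    (t := HeytingTerm.var i) ⟨i, hi, rfl⟩
  simpa [Nof] using this

lemma psi_le_theta (hdim : DimLE H d) {w u : PrimeTheory a} (hu : u ∈ SW w) :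
    (psi u).eval b ≤ (theta w).eval b :=
  le_trans (le_eval_supT (psi_SW_finite hdim w) ⟨u, hu, rfl⟩) le_sup_right

lemma chi_le_Xt (hdim : DimLE H d) {w u : PrimeTheory a} {t : HeytingTerm l}
    (hu : u ∈ SW w) (ht : t ∈ u.mem) : (chi u).eval b ≤ (Xt w t).eval b :=
  le_eval_supT (Xt_set_finite hdim w t) ⟨u, hu, ht, rfl⟩

lemma Xt_mono (hdim : DimLE H d) {w u : PrimeTheory a} {t : HeytingTerm l}
    (hu : u ∈ SW w) : (Xt u t).eval b ≤ (Xt w t).eval b := by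
  refine eval_supT_le ?_
  rintro _ ⟨v, hv, htv, rfl⟩
  exact chi_le_Xt hdim (SW_trans hu hv) htv

lemma chi_le_Sig (hdim : DimLE H d) {w u : PrimeTheory a} (hu : u ∈ SW w) :
    (chi u).eval b ≤ (Sig w).eval b :=
  le_eval_supT (chi_SW_finite hdim w) ⟨u, hu, rfl⟩

lemma Xt_le_Sig (hdim : DimLE H d) {w : PrimeTheory a} {t : HeytingTerm l} :
    (Xt w t).eval b ≤ (Sig w).eval b := by
  refine eval_supT_le ?_
  rintro _ ⟨v, hv, _, rfl⟩
  exact chi_le_Sig hdim hv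

lemma Sig_inf_le (hdim : DimLE H d) {w : PrimeTheory a} {c y : K}
    (h : ∀ u ∈ SW w, c ⊓ (chi u).eval b ≤ y) : c ⊓ (Sig w).eval b ≤ y := by
  refine inf_eval_supT_le ?_
  rintro _ ⟨u, hu, rfl⟩
  exact h u hu

end ChiEval

/-! ### The main semantic lemma (P2) -/

universe uK

theorem chi_pos_neg {d : ℕ} (hdim : DimLE H d) {a : Fin l → H} (t : HeytingTerm l) :
    ∀ w : PrimeTheory a,
      (t ∈ w.mem → ∀ {K : Type uK} [HeytingAlgebra K] (b : Fin l → K),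
        (chi w).eval b ≤ t.eval b) ∧
      (t ∉ w.mem → ∀ {K : Type uK} [HeytingAlgebra K] (b : Fin l → K),
        (chi w).eval b ⊓ t.eval b ≤ (Xt w t).eval b) := by
  induction t with
  | var i =>
    intro w
    constructor
    · intro hmem K _ b
      simpa using chi_le_var hdim hmem
    · intro hnm
      revert hnm
      have hgen : ∀ (k : ℕ) (w : PrimeTheory a), rank w ≤ k →
          HeytingTerm.var i ∉ w.mem → ∀ {K : Type uK} [HeytingAlgebra K] (b : Fin l → K),
          (chi w).eval b ⊓ (HeytingTerm.var i).eval b ≤ (Xt w (HeytingTerm.var i)).eval b := by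
        intro k
        induction k using Nat.strong_induction_on with
        | _ k ih =>
          intro w hrk hnm K _ b
          have h1 : (HeytingTerm.var i).eval b ≤ (theta w).eval b := by
            simpa using var_le_theta (b := b) hnm
          have h2 : (chi w).eval b ⊓ (HeytingTerm.var i).eval b ≤ (Sig w).eval b :=
            (inf_le_inf_left _ h1).trans (chi_inf_theta_le_Sig hdim w)
          have h3 : (chi w).eval b ⊓ (HeytingTerm.var i).eval b ≤
              (Sig w).eval b ⊓ (HeytingTerm.var i).eval b := le_inf h2 inf_le_right
          refine h3.trans ?_
          rw [inf_comm]
          refine Sig_inf_le hdim ?_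
          intro u hu
          by_cases htu : HeytingTerm.var i ∈ u.mem
          · exact inf_le_right.trans (chi_le_Xt hdim hu htu)
          · have hru : rank u < rank w := rank_lt_of_lt hdim hu
            have := ih (rank u) (by omega) u le_rfl htu b
            rw [inf_comm] at this
            exact this.trans (Xt_mono hdim hu)
      exact fun hnm => hgen (rank w) w le_rfl hnm
  | bot =>
    intro w
    refine ⟨fun hmem => absurd hmem w.bot_nmem, fun _ _ _ b => ?_⟩
    simp
  | top =>
    intro w
    exact ⟨fun _ _ _ b => le_top, fun hnm => absurd w.top_mem hnm⟩
  | inf r s ihr ihs =>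
    intro w
    constructor
    · intro hmem K _ b
      have hr : r ∈ w.mem := w.closed hmem (by simp)
      have hs : s ∈ w.mem := w.closed hmem (by simp)
      simpa using le_inf ((ihr w).1 hr b) ((ihs w).1 hs b)
    · intro hnm K _ b
      by_cases hr : r ∈ w.mem
      · have hs : s ∉ w.mem := fun hs => hnm (w.inf_mem hr hs)
        have step1 : (chi w).eval b ⊓ (HeytingTerm.inf r s).eval b ≤ (Xt w s).eval b := by
          refine le_trans ?_ ((ihs w).2 hs b)
          simp only [eval_inf']
          exact inf_le_inf_left _ inf_le_right
        refine step1.trans (eval_supT_le ?_)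
        rintro _ ⟨v, hv, hsv, rfl⟩
        have hrv : r ∈ v.mem := (show w < v from hv).le hr
        exact chi_le_Xt hdim hv (v.inf_mem hrv hsv)
      · have step1 : (chi w).eval b ⊓ (HeytingTerm.inf r s).eval b ≤
            (Xt w r).eval b ⊓ s.eval b := by
          refine le_inf ?_ (by simp [inf_le_right, inf_assoc]; exact inf_le_right.trans inf_le_right)
          refine le_trans ?_ ((ihr w).2 hr b)
          simp only [eval_inf']
          exact le_inf inf_le_left (inf_le_right.trans inf_le_left)
        refine step1.trans ?_
        rw [inf_comm]
        refine inf_eval_supT_le ?_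
        rintro _ ⟨u, hu, hru, rfl⟩
        by_cases hsu : s ∈ u.mem
        · exact inf_le_right.trans (chi_le_Xt hdim hu (u.inf_mem hru hsu))
        · have h2 := (ihs u).2 hsu b
          rw [inf_comm]
          have h3 : (chi u).eval b ⊓ s.eval b ≤ (Xt u s).eval b := by
            simpa using h2
          refine h3.trans (eval_supT_le ?_)
          rintro _ ⟨v, hv, hsv, rfl⟩
          have hrv : r ∈ v.mem := (show u < v from hv).le hru
          exact chi_le_Xt hdim (SW_trans hu hv) (v.inf_mem hrv hsv)
  | sup r s ihr ihs =>
    intro w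
    constructor
    · intro hmem K _ b
      rcases w.prime hmem with h | h
      · exact ((ihr w).1 h b).trans (by simp)
      · exact ((ihs w).1 h b).trans (by simp)
    · intro hnm K _ b
      have hr : r ∉ w.mem := fun h => hnm (w.closed h (by simp))
      have hs : s ∉ w.mem := fun h => hnm (w.closed h (by simp))
      have key : (chi w).eval b ⊓ (HeytingTerm.sup r s).eval b ≤
          (Xt w r).eval b ⊔ (Xt w s).eval b := by
        simp only [eval_sup', inf_sup_left]
        exact sup_le_sup ((ihr w).2 hr b) ((ihs w).2 hs b)
      refine key.trans (sup_le (eval_supT_le ?_) (eval_supT_le ?_))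
      · rintro _ ⟨v, hv, hrv, rfl⟩
        exact chi_le_Xt hdim hv (v.closed hrv (by simp))
      · rintro _ ⟨v, hv, hsv, rfl⟩
        exact chi_le_Xt hdim hv (v.closed hsv (by simp))
  | himp r s ihr ihs =>
    intro w
    constructor
    · intro hmem K _ b
      simp only [eval_himp']
      rw [le_himp_iff]
      by_cases hr : r ∈ w.mem
      · have hs : s ∈ w.mem := w.closed (w.inf_mem hmem hr) (by simp [himp_inf_le])
        exact inf_le_left.trans ((ihs w).1 hs b)
      · refine ((ihr w).2 hr b).trans (eval_supT_le ?_)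
        rintro _ ⟨u, hu, hru, rfl⟩
        have hsu : s ∈ u.mem :=
          u.closed (u.inf_mem ((show w < u from hu).le hmem) hru) (by simp [himp_inf_le])
        exact (ihs u).1 hsu b
    · intro hnm
      revert hnm
      have hgen : ∀ (k : ℕ) (w : PrimeTheory a), rank w ≤ k →
          HeytingTerm.himp r s ∉ w.mem → ∀ {K : Type uK} [HeytingAlgebra K] (b : Fin l → K),
          (chi w).eval b ⊓ (HeytingTerm.himp r s).eval b ≤
            (Xt w (HeytingTerm.himp r s)).eval b := by
        intro k
        induction k using Nat.strong_induction_on with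
        | _ k ih =>
          intro w hrk hnm K _ b
          obtain ⟨u, hwu, hru, hsu⟩ : ∃ u : PrimeTheory a, w ≤ u ∧ r ∈ u.mem ∧ s ∉ u.mem := by
            by_contra hcon
            push_neg at hcon
            exact hnm (himp_mem_iff.2 fun u h1 h2 => hcon u h1 h2)
          by_cases hlt : w < u
          · -- u ∈ SW w
            have hpsile : (HeytingTerm.himp r s).eval b ≤ (psi u).eval b := by
              show r.eval b ⇨ s.eval b ≤ (chi u).eval b ⇨ (Sig u).eval b
              rw [le_himp_iff]
              calc (r.eval b ⇨ s.eval b) ⊓ (chi u).eval b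
                  ≤ (r.eval b ⇨ s.eval b) ⊓ r.eval b ⊓ (chi u).eval b := by
                    refine le_inf (le_inf inf_le_left ?_) inf_le_right
                    exact inf_le_right.trans ((ihr u).1 hru b)
                _ ≤ s.eval b ⊓ (chi u).eval b := inf_le_inf_right _ himp_inf_le
                _ ≤ (chi u).eval b ⊓ s.eval b := (inf_comm _ _).le
                _ ≤ (Xt u s).eval b := by simpa using (ihs u).2 hsu b
                _ ≤ (Sig u).eval b := Xt_le_Sig hdim
            have hth : (HeytingTerm.himp r s).eval b ≤ (theta w).eval b :=
              hpsile.trans (psi_le_theta hdim hlt)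
            have hSig : (chi w).eval b ⊓ (HeytingTerm.himp r s).eval b ≤ (Sig w).eval b :=
              (inf_le_inf_left _ hth).trans (chi_inf_theta_le_Sig hdim w)
            have h3 : (chi w).eval b ⊓ (HeytingTerm.himp r s).eval b ≤
                (Sig w).eval b ⊓ (HeytingTerm.himp r s).eval b := le_inf hSig inf_le_right
            refine h3.trans ?_
            rw [inf_comm]
            refine Sig_inf_le hdim ?_
            intro v hv
            by_cases htv : HeytingTerm.himp r s ∈ v.mem
            · exact inf_le_right.trans (chi_le_Xt hdim hv htv)
            · have hrv : rank v < rank w := rank_lt_of_lt hdim hv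
              have := ih (rank v) (by omega) v le_rfl htv b
              rw [inf_comm] at this
              exact this.trans (Xt_mono hdim hv)
          · -- u = w
            have heq : w = u := eq_of_le_of_not_lt hwu hlt
            subst heq
            have hstep : (chi w).eval b ⊓ (HeytingTerm.himp r s).eval b ≤
                (chi w).eval b ⊓ s.eval b := by
              refine le_inf inf_le_left ?_
              calc (chi w).eval b ⊓ (HeytingTerm.himp r s).eval b
                  ≤ (r.eval b ⇨ s.eval b) ⊓ r.eval b := by
                    refine le_inf ?_ (inf_le_left.trans ((ihr w).1 hru b))
                    simp only [eval_himp']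
                    exact inf_le_right
                _ ≤ s.eval b := himp_inf_le
            refine hstep.trans ?_
            have h2 : (chi w).eval b ⊓ s.eval b ≤ (Xt w s).eval b := by
              simpa using (ihs w).2 hsu b
            refine h2.trans (eval_supT_le ?_)
            rintro _ ⟨v, hv, hsv, rfl⟩
            have : HeytingTerm.himp r s ∈ v.mem := v.closed hsv (by simp [le_himp])
            exact chi_le_Xt hdim hv this
      exact fun hnm => hgen (rank w) w le_rfl hnm


/-! ### Each prime theory contains its characteristic term -/

theorem chi_mem {d : ℕ} (hdim : DimLE H d) {a : Fin l → H} :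
    ∀ w : PrimeTheory a, chi w ∈ w.mem := by
  suffices hgen : ∀ (k : ℕ) (w : PrimeTheory a), rank w ≤ k → chi w ∈ w.mem from
    fun w => hgen (rank w) w le_rfl
  intro k
  induction k using Nat.strong_induction_on with
  | _ k ih =>
    intro w hrk
    rw [chi_eq hdim w]
    refine w.inf_mem ?_ ?_
    · refine PrimeTheory.infT_mem ?_
      rintro _ ⟨i, hi, rfl⟩
      exact hi
    · refine himp_mem_iff.2 ?_
      intro u hwu hth
      by_cases hlt : w < u
      · have hcu : chi u ∈ u.mem :=
          ih (rank u) (lt_of_lt_of_le (rank_lt_of_lt hdim hlt) hrk) u le_rfl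
        exact u.closed hcu (chi_le_Sig hdim hlt)
      · have heq : w = u := eq_of_le_of_not_lt hwu hlt
        subst heq
        exfalso
        rcases w.prime hth with hN | hPsi
        · obtain ⟨x, hx, hxw⟩ := PrimeTheory.supT_mem hN
          obtain ⟨i, hi, rfl⟩ := hx
          exact hi hxw
        · obtain ⟨x, hx, hxw⟩ := PrimeTheory.supT_mem hPsi
          obtain ⟨v, hv, rfl⟩ := hx
          have hpv : psi v ∈ v.mem := (show w < v from hv).le hxw
          have hcv : chi v ∈ v.mem :=
            ih (rank v) (lt_of_lt_of_le (rank_lt_of_lt hdim hv) hrk) v le_rfl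
          have hSv : Sig v ∈ v.mem := by
            refine v.closed (v.inf_mem hpv hcv) ?_
            show (psi v).eval a ⊓ (chi v).eval a ≤ (Sig v).eval a
            exact himp_inf_le
          obtain ⟨y, hy, hyv⟩ := PrimeTheory.supT_mem hSv
          obtain ⟨x', hx', rfl⟩ := hy
          have htr : x'.mem ⊆ v.mem := by
            intro t ht
            exact v.closed hyv ((chi_pos_neg hdim t x').1 ht a)
          exact (PrimeTheory.lt_iff.1 hx').2 htr

/-! ### Degree bounds -/

theorem degree_chi_le {d : ℕ} (hdim : DimLE H d) {a : Fin l → H} :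
    ∀ w : PrimeTheory a, (chi w).degree ≤ 2 * rank w + 1 := by
  suffices hgen : ∀ (k : ℕ) (w : PrimeTheory a), rank w ≤ k →
      (chi w).degree ≤ 2 * rank w + 1 from fun w => hgen (rank w) w le_rfl
  intro k
  induction k using Nat.strong_induction_on with
  | _ k ih =>
    intro w hrk
    have hL : (Lof (lit w)).degree ≤ 0 := by
      refine degree_infT_le ?_
      rintro _ ⟨i, _, rfl⟩
      exact le_rfl
    have hN : (Nof (lit w)).degree ≤ 0 := by
      refine degree_supT_le ?_
      rintro _ ⟨i, _, rfl⟩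
      exact le_rfl
    have hSigU : ∀ u ∈ SW w, (Sig u).degree ≤ 2 * rank u := by
      intro u hu
      refine degree_supT_le ?_
      rintro _ ⟨v, hv, rfl⟩
      have h1 : rank v < rank u := rank_lt_of_lt hdim hv
      have h2 : rank u < rank w := rank_lt_of_lt hdim hu
      have h3 := ih (rank v) (by omega) v le_rfl
      omega
    have hSig : (Sig w).degree ≤ 2 * rank w := by
      refine degree_supT_le ?_
      rintro _ ⟨u, hu, rfl⟩
      have h1 : rank u < rank w := rank_lt_of_lt hdim hu
      have h3 := ih (rank u) (by omega) u le_rfl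
      omega
    have hPsi : (supT (psi '' SW w)).degree ≤ 2 * rank w := by
      refine degree_supT_le ?_
      rintro _ ⟨u, hu, rfl⟩
      have h1 : rank u < rank w := rank_lt_of_lt hdim hu
      have h2 := ih (rank u) (by omega) u le_rfl
      have h3 := hSigU u hu
      show max (chi u).degree (Sig u).degree + 1 ≤ 2 * rank w
      omega
    have htheta : (theta w).degree ≤ 2 * rank w := by
      show max (Nof (lit w)).degree (supT (psi '' SW w)).degree ≤ 2 * rank w
      omega
    rw [chi_eq hdim w]
    show max (Lof (lit w)).degree (max (theta w).degree (Sig w).degree + 1) ≤ 2 * rank w + 1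
    omega

lemma degree_chi_le_d {d : ℕ} (hdim : DimLE H d) {a : Fin l → H} (w : PrimeTheory a) :
    (chi w).degree ≤ 2 * d + 1 := by
  have h1 := degree_chi_le hdim w
  have h2 := rank_le_d hdim w
  omega

/-! ### The "theory of ⊤" filter -/

lemma top_filterish (a : Fin l → H) : Filterish a {x : HeytingTerm l | x.eval a = ⊤} := by
  refine ⟨rfl, ?_, ?_⟩
  · intro t s ht hs
    show t.eval a ⊓ s.eval a = ⊤
    rw [Set.mem_setOf_eq] at ht hs
    rw [ht, hs, inf_top_eq]
  · intro t s ht hle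
    rw [Set.mem_setOf_eq] at ht ⊢
    exact top_le_iff.1 (ht ▸ hle)

end SimDimProof

theorem similar_of_simDeg_dim_le (d : ℕ) :
    ∃ n : ℕ, ∀ (l : ℕ) (H : Type*) (H' : Type*) [HeytingAlgebra H] [HeytingAlgebra H']
      (a : Fin l → H) (a' : Fin l → H'), DimLE H d →
      (∀ t : HeytingTerm l, t.degree ≤ n → (t.eval a = ⊤ ↔ t.eval a' = ⊤)) →
      ∀ t : HeytingTerm l, t.eval a = ⊤ ↔ t.eval a' = ⊤ := by
  classical
  refine ⟨2 * d + 2, ?_⟩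
  intro l H H' _ _ a a' hdim hagree t
  open SimDimProof in
  constructor
  · -- forward direction, via the lower approximation
    intro h
    set S : Set (HeytingTerm l) := {c | ∃ w : PrimeTheory a, t ∈ w.mem ∧ c = chi w} with hS
    have hfin : S.Finite :=
      (chi_range_finite hdim).subset (by rintro _ ⟨w, _, rfl⟩; exact ⟨w, rfl⟩)
    have hdeg : (supT S).degree ≤ 2 * d + 2 := by
      refine degree_supT_le ?_
      rintro _ ⟨w, _, rfl⟩
      have := degree_chi_le_d hdim w
      omega
    have hTma : (supT S).eval a = ⊤ := by
      by_contra hne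
      obtain ⟨w, hFw, hTmw⟩ :=
        exists_prime_avoiding (top_filterish a) (s₀ := supT S) hne
      have htw : t ∈ w.mem := hFw h
      have hchi : chi w ∈ w.mem := chi_mem hdim w
      have hle : (chi w).eval a ≤ (supT S).eval a := le_eval_supT hfin ⟨w, htw, rfl⟩
      exact hTmw (w.closed hchi hle)
    have hTma' : (supT S).eval a' = ⊤ := (hagree (supT S) hdeg).1 hTma
    have hle : (supT S).eval a' ≤ t.eval a' := by
      refine eval_supT_le ?_
      rintro _ ⟨w, htw, rfl⟩
      exact (chi_pos_neg hdim t w).1 htw a'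
    exact top_le_iff.1 (hTma' ▸ hle)
  · -- backward direction, via the upper approximation
    intro h'
    set S : Set (HeytingTerm l) :=
      {c | ∃ w : PrimeTheory a, t ∉ w.mem ∧ c = HeytingTerm.himp (chi w) (Xt w t)} with hS
    have hfin : S.Finite := by
      have hr : (Set.range (chi : PrimeTheory a → HeytingTerm l)).Finite :=
        chi_range_finite hdim
      have hsub : (supT '' {T : Set (HeytingTerm l) |
          T ⊆ Set.range (chi : PrimeTheory a → HeytingTerm l)}).Finite :=
        Set.Finite.image _ (Set.Finite.finite_subsets hr)
      have hprod : ((Set.range (chi : PrimeTheory a → HeytingTerm l)) ×ˢ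
          (supT '' {T : Set (HeytingTerm l) |
            T ⊆ Set.range (chi : PrimeTheory a → HeytingTerm l)})).Finite :=
        Set.Finite.prod hr hsub
      have hbig : ((fun p : HeytingTerm l × HeytingTerm l => HeytingTerm.himp p.1 p.2) ''
          ((Set.range (chi : PrimeTheory a → HeytingTerm l)) ×ˢ
            (supT '' {T : Set (HeytingTerm l) |
              T ⊆ Set.range (chi : PrimeTheory a → HeytingTerm l)}))).Finite :=
        Set.Finite.image _ hprod
      refine hbig.subset ?_
      rintro _ ⟨w, hw, rfl⟩
      refine ⟨(chi w, Xt w t), ⟨⟨w, rfl⟩, ?_⟩, rfl⟩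
      refine ⟨{c | ∃ u ∈ SW w, t ∈ u.mem ∧ c = chi u}, ?_, rfl⟩
      rintro _ ⟨u, _, _, rfl⟩
      exact ⟨u, rfl⟩
    have hdeg : (infT S).degree ≤ 2 * d + 2 := by
      refine degree_infT_le ?_
      rintro _ ⟨w, _, rfl⟩
      have h1 := degree_chi_le_d hdim w
      have h2 : (Xt w t).degree ≤ 2 * d + 1 := by
        refine degree_supT_le ?_
        rintro _ ⟨u, _, _, rfl⟩
        exact degree_chi_le_d hdim u
      show max (chi w).degree (Xt w t).degree + 1 ≤ 2 * d + 2
      omega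
    have hTpa' : (infT S).eval a' = ⊤ := by
      refine top_unique (le_eval_infT ?_)
      rintro _ ⟨w, hw, rfl⟩
      show ⊤ ≤ (chi w).eval a' ⇨ (Xt w t).eval a'
      rw [le_himp_iff]
      have := (chi_pos_neg hdim t w).2 hw a'
      rw [h'] at this
      simpa using this
    have hTpa : (infT S).eval a = ⊤ := (hagree (infT S) hdeg).2 hTpa'
    by_contra hne
    obtain ⟨w, hFw, htw⟩ := exists_prime_avoiding (top_filterish a) (s₀ := t) hne
    have hcomp : HeytingTerm.himp (chi w) (Xt w t) ∈ S := ⟨w, htw, rfl⟩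
    have h1 : (infT S).eval a ≤ (HeytingTerm.himp (chi w) (Xt w t)).eval a :=
      eval_infT_le hfin hcomp
    have h2 : (chi w).eval a ≤ (Xt w t).eval a := by
      have h3 : ⊤ ≤ (chi w).eval a ⇨ (Xt w t).eval a := by
        rw [← hTpa]
        exact h1
      calc (chi w).eval a = ⊤ ⊓ (chi w).eval a := (top_inf_eq _).symm
        _ ≤ ((chi w).eval a ⇨ (Xt w t).eval a) ⊓ (chi w).eval a := inf_le_inf_right _ h3
        _ ≤ (Xt w t).eval a := himp_inf_le
    have hXtw : Xt w t ∈ w.mem := w.closed (chi_mem hdim w) h2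
    obtain ⟨c, hc, hcw⟩ := PrimeTheory.supT_mem hXtw
    obtain ⟨u, hu, htu, rfl⟩ := hc
    exact htw (w.closed hcw ((chi_pos_neg hdim t u).1 htu a))
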